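/- arXiv:1911.07535 — 6 statements merged into one kernel-verified Lean document; each statement's English description precedes it below -/
import Mathlib

section
/- The nonlinear example system satisfies the convex-combination propagation property (Assumption 3) with the explicit multipliers γ_j = λ_j p_j / Σ_{i=0}^L λ_i p_i: for any t ≥ 0, any finite family of states x_j = (p_j, q_j) ∈ ℝ² with p_j > 0 and inputs u_j ∈ ℝ (j = 0, …, L), and any multipliers λ_j ≥ 0 with Σ_{j=0}^L λ_j = 1, the numbers γ_j = λ_j p_j / (Σ_{i=0}^L λ_i p_i) are well defined, satisfy γ_j ≥ 0 and Σ_{j=0}^L γ_j = 1, and f_t(Σ_{j=0}^L λ_j x_j, Σ_{j=0}^L γ_j u_j) = Σ_{j=0}^L λ_j f_t(x_j, u_j). -/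
open Real

/-- Dynamics of the nonlinear time-varying example system:
`f t (p, q) u = (p + 0.1 q, q + 0.1 p (5 sin(2πt/P) + u))`. -/
noncomputable def fNL (P : ℕ) (t : ℕ) (z : ℝ × ℝ) (v : ℝ) : ℝ × ℝ :=
  (z.1 + 0.1 * z.2, z.2 + 0.1 * z.1 * (5 * Real.sin (2 * π * t / P) + v))

/-- **The nonlinear example system satisfies the convex-combination propagation property
(Assumption 3)** with the explicit multipliers `γ_j = λ_j p_j / ∑_i λ_i p_i`:
for any `t ≥ 0`, states `x_j = (p_j, q_j)` with `p_j > 0`, inputs `u_j`, and multipliers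
`λ_j ≥ 0` summing to one, the `γ_j` are well defined (positive denominator),
nonnegative, sum to one, and
`f t (∑ λ_j x_j) (∑ γ_j u_j) = ∑ λ_j f t (x_j) (u_j)`. -/
theorem nonlinear_example_assumption3 (P : ℕ) (hP : 1 ≤ P) (t : ℕ) (L : ℕ)
    (x : Fin (L + 1) → ℝ × ℝ) (u : Fin (L + 1) → ℝ)
    (hp : ∀ j, 0 < (x j).1)
    (lam : Fin (L + 1) → ℝ) (hlam : ∀ j, 0 ≤ lam j) (hsum : ∑ j, lam j = 1) :
    0 < (∑ i, lam i * (x i).1) ∧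
    (∀ j, 0 ≤ lam j * (x j).1 / (∑ i, lam i * (x i).1)) ∧
    (∑ j, lam j * (x j).1 / (∑ i, lam i * (x i).1)) = 1 ∧
    fNL P t (∑ j, lam j • x j)
        (∑ j, (lam j * (x j).1 / (∑ i, lam i * (x i).1)) * u j)
      = ∑ j, lam j • fNL P t (x j) (u j) := by
  set S := ∑ i, lam i * (x i).1 with hS
  have hSpos : 0 < S := by
    obtain ⟨j, hj⟩ : ∃ j, 0 < lam j := by
      by_contra h
      push_neg at h
      have : ∀ j, lam j = 0 := fun j => le_antisymm (h j) (hlam j)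
      simp [this] at hsum
    exact Finset.sum_pos' (fun i _ => mul_nonneg (hlam i) (hp i).le)
      ⟨j, Finset.mem_univ j, mul_pos hj (hp j)⟩
  have hSne : S ≠ 0 := hSpos.ne'
  refine ⟨hSpos, fun j => div_nonneg (mul_nonneg (hlam j) (hp j).le) hSpos.le, ?_, ?_⟩
  · rw [← Finset.sum_div, div_eq_one_iff_eq hSne]
  · have h1 : (∑ j, lam j • x j).1 = ∑ j, lam j * (x j).1 := by
      simp [Prod.fst_sum, Prod.smul_def, smul_eq_mul]
    have h2 : (∑ j, lam j • x j).2 = ∑ j, lam j * (x j).2 := by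
      simp [Prod.snd_sum, Prod.smul_def, smul_eq_mul]
    have hu : S * ∑ j, (lam j * (x j).1 / S) * u j = ∑ j, lam j * (x j).1 * u j := by
      rw [Finset.mul_sum]
      congr 1; funext j
      field_simp
    ext
    · simp only [fNL, h1, h2, Prod.fst_sum]
      rw [Finset.mul_sum, ← Finset.sum_add_distrib]
      congr 1; funext j
      simp [Prod.smul_def, smul_eq_mul]; ring
    · simp only [fNL, h1, h2, Prod.snd_sum]
      rw [mul_add, ← hS, mul_comm (0.1 : ℝ) S, mul_assoc, mul_comm S (0.1 : ℝ),
        mul_assoc (0.1 : ℝ) S, hu]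
      rw [hS, Finset.sum_mul, Finset.mul_sum, ← Finset.sum_add_distrib, ← Finset.sum_add_distrib]
      congr 1; funext j
      simp [Prod.smul_def, smul_eq_mul]; ring
end

section
/- Induction step of recursive feasibility (Theorem 1): suppose the realized closed-loop trajectory satisfies x_{k+1} = f_k(x_k, u_k), x_k ∈ X_k, u_k ∈ U_k for all k ≤ t, suppose the system satisfies Assumption 3, and suppose there exists a feasible plan at time t: states x̄_t, …, x̄_{t+N} and inputs ū_t, …, ū_{t+N−1} with x̄_t = x_t, x̄_{k+1} = f_k(x̄_k, ū_k), x̄_k ∈ X_k, ū_k ∈ U_k for k = t, …, t+N−1, and terminal state x̄_{t+N} = Σ_{j=1}^M λ_j x_{t+N−jP} for some multipliers λ_j ≥ 0 with Σ_{j=1}^M λ_j = 1, where M = floor(t/P) ≥ 1. If the applied input is u_t = ū_t (so x_{t+1} = f_t(x_t, ū_t) = x̄_{t+1}), then there exists a feasible plan at time t+1: there exist multipliers γ_j ≥ 0 with Σ_{j=1}^M γ_j = 1 such that the states x̄_{t+1}, …, x̄_{t+N}, Σ_{j=1}^M λ_j x_{t+1+N−jP} and inputs ū_{t+1}, …, ū_{t+N−1},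 Σ_{j=1}^M γ_j u_{t+N−jP} satisfy the dynamics, satisfy the state and input constraints at times t+1, …, t+N, and have terminal state Σ_{j=1}^M λ_j x_{t+1+N−jP} ∈ CS_{t+1+N}. -/
/-- The sampled safe set at time `s`: the states `x (s - j*P)` of the realized trajectory
for `j = 1, …, M` with `M = ⌊s/P⌋`. -/
def SampledSafeSet {n : ℕ} (P : ℕ) (x : ℕ → Fin n → ℝ) (s : ℕ) : Set (Fin n → ℝ) :=
  {y | ∃ j : ℕ, 1 ≤ j ∧ j ≤ s / P ∧ y = x (s - j * P)}

/-- The convex safe set at time `s`: the convex hull of the sampled safe set. -/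
def ConvexSafeSet {n : ℕ} (P : ℕ) (x : ℕ → Fin n → ℝ) (s : ℕ) : Set (Fin n → ℝ) :=
  convexHull ℝ (SampledSafeSet P x s)

/-- **Induction step of recursive feasibility (Theorem 1).**
If the realized closed-loop trajectory is feasible up to time `t`, Assumption 3 holds,
and there is a feasible plan at time `t` whose first input is applied to the system,
then there is a feasible plan at time `t + 1`, obtained by shifting the previous plan
and appending the terminal state `∑_j λ_j x (t+1+N-jP)` reached with the input
`∑_j γ_j u (t+N-jP)` given by Assumption 3. -/
theorem recursive_feasibility_induction_step {n d : ℕ} (P N : ℕ)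
    (hN : 1 ≤ N) (hNP : N < P)
    (f : ℕ → (Fin n → ℝ) → (Fin d → ℝ) → (Fin n → ℝ))
    (X : ℕ → Set (Fin n → ℝ)) (U : ℕ → Set (Fin d → ℝ))
    (hf : ∀ t, f (t + P) = f t)
    (hX : ∀ t, Convex ℝ (X t)) (hXper : ∀ t, X (t + P) = X t)
    (hU : ∀ t, Convex ℝ (U t)) (hUper : ∀ t, U (t + P) = U t)
    -- Assumption 3:
    (hA3 : ∀ (t' L : ℕ) (xs : Fin (L + 1) → Fin n → ℝ) (us : Fin (L + 1) → Fin d → ℝ),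
      (∀ j, xs j ∈ X t' ∧ us j ∈ U t' ∧ f t' (xs j) (us j) ∈ X (t' + 1)) →
      ∀ lam : Fin (L + 1) → ℝ, (∀ j, 0 ≤ lam j) → (∑ j, lam j = 1) →
        ∃ gam : Fin (L + 1) → ℝ, (∀ j, 0 ≤ gam j) ∧ (∑ j, gam j = 1) ∧
          f t' (∑ j, lam j • xs j) (∑ j, gam j • us j) = ∑ j, lam j • f t' (xs j) (us j))
    -- realized closed-loop trajectory, feasible up to time `t`:
    (x : ℕ → Fin n → ℝ) (u : ℕ → Fin d → ℝ) (t : ℕ)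
    (hhist : ∀ k, k ≤ t → x (k + 1) = f k (x k) (u k) ∧ x k ∈ X k ∧ u k ∈ U k)
    (hxcon : ∀ k, k ≤ t + 1 → x k ∈ X k)
    -- a feasible plan at time `t`, with `M = ⌊t/P⌋ ≥ 1`:
    (hM : 1 ≤ t / P)
    (xbar : ℕ → Fin n → ℝ) (ubar : ℕ → Fin d → ℝ) (lam : Fin (t / P) → ℝ)
    (hlam : ∀ j, 0 ≤ lam j) (hlamsum : ∑ j, lam j = 1)
    (hinit : xbar t = x t)
    (hpdyn : ∀ k, t ≤ k → k < t + N → xbar (k + 1) = f k (xbar k) (ubar k))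
    (hpcon : ∀ k, t ≤ k → k < t + N → xbar k ∈ X k ∧ ubar k ∈ U k)
    (hterm : xbar (t + N) = ∑ j : Fin (t / P), lam j • x (t + N - (j.1 + 1) * P))
    -- the applied input is the first input of the plan:
    (happl : u t = ubar t) (hcl : x (t + 1) = f t (x t) (u t)) :
    ∃ gam : Fin (t / P) → ℝ, (∀ j, 0 ≤ gam j) ∧ (∑ j, gam j = 1) ∧
      -- the shifted/extended plan is feasible at time `t + 1`:
      (xbar (t + 1) = x (t + 1)) ∧
      (∀ k, t + 1 ≤ k → k < t + N → xbar (k + 1) = f k (xbar k) (ubar k)) ∧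
      (f (t + N) (xbar (t + N)) (∑ j : Fin (t / P), gam j • u (t + N - (j.1 + 1) * P))
        = ∑ j : Fin (t / P), lam j • x (t + 1 + N - (j.1 + 1) * P)) ∧
      (∀ k, t + 1 ≤ k → k < t + N → xbar k ∈ X k ∧ ubar k ∈ U k) ∧
      xbar (t + N) ∈ X (t + N) ∧
      (∑ j : Fin (t / P), gam j • u (t + N - (j.1 + 1) * P)) ∈ U (t + N) ∧
      (∑ j : Fin (t / P), lam j • x (t + 1 + N - (j.1 + 1) * P))
        ∈ ConvexSafeSet P x (t + 1 + N) := by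
  have hP : 1 ≤ P := by omega
  obtain ⟨L, hL⟩ : ∃ L, t / P = L + 1 := ⟨t / P - 1, (Nat.succ_pred_eq_of_pos hM).symm⟩
  have hperiter : ∀ (α : Type) (g : ℕ → α), (∀ s, g (s + P) = g s) →
      ∀ (m k : ℕ), g (k + m * P) = g k := by
    intro α g hg m
    induction m with
    | zero => simp
    | succ m ih =>
      intro k
      have h1 : k + (m + 1) * P = (k + m * P) + P := by ring
      rw [h1, hg, ih]
  have hfper : ∀ m k, f (k + m * P) = f k := hperiter _ f hf
  have hXper' : ∀ m k, X (k + m * P) = X k := hperiter _ X hXper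
  have hUper' : ∀ m k, U (k + m * P) = U k := hperiter _ U hUper
  -- basic index facts and feasibility of the sampled points at time t+N
  have hfeas : ∀ j : ℕ, j < t / P →
      x (t + N - (j + 1) * P) ∈ X (t + N) ∧ u (t + N - (j + 1) * P) ∈ U (t + N) ∧
      f (t + N) (x (t + N - (j + 1) * P)) (u (t + N - (j + 1) * P)) = x (t + 1 + N - (j + 1) * P) ∧
      x (t + 1 + N - (j + 1) * P) ∈ X (t + N + 1) := by
    intro j hj
    have h1 : (j + 1) * P ≤ (t / P) * P := Nat.mul_le_mul_right P hj
    have h2 : (t / P) * P ≤ t := Nat.div_mul_le_self t P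
    have h3 : P ≤ (j + 1) * P := Nat.le_mul_of_pos_left P (by omega)
    set k := t + N - (j + 1) * P with hk
    have hk1 : k + (j + 1) * P = t + N := by omega
    have hk2 : k + 1 ≤ t := by omega
    have hhk := hhist k (by omega)
    have hXeq : X (t + N) = X k := by have := hXper' (j + 1) k; rwa [hk1] at this
    have hUeq : U (t + N) = U k := by have := hUper' (j + 1) k; rwa [hk1] at this
    have hfeq : f (t + N) = f k := by have := hfper (j + 1) k; rwa [hk1] at this
    have hXeq2 : X (t + N + 1) = X (k + 1) := by
      have := hXper' (j + 1) (k + 1)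
      rwa [show k + 1 + (j + 1) * P = t + N + 1 by omega] at this
    have hx1 : t + 1 + N - (j + 1) * P = k + 1 := by omega
    refine ⟨hXeq ▸ hhk.2.1, hUeq ▸ hhk.2.2, ?_, ?_⟩
    · rw [hfeq, hx1]; exact hhk.1.symm
    · rw [hx1, hXeq2]; exact hxcon (k + 1) (by omega)
  -- apply Assumption 3
  set xs : Fin (L + 1) → Fin n → ℝ := fun j => x (t + N - (j.1 + 1) * P) with hxs
  set us : Fin (L + 1) → Fin d → ℝ := fun j => u (t + N - (j.1 + 1) * P) with hus
  have hjlt : ∀ j : Fin (L + 1), j.1 < t / P := fun j => by omega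
  have hcond : ∀ j, xs j ∈ X (t + N) ∧ us j ∈ U (t + N) ∧
      f (t + N) (xs j) (us j) ∈ X (t + N + 1) := by
    intro j
    obtain ⟨a, b, c, e⟩ := hfeas j.1 (hjlt j)
    exact ⟨a, b, by rw [hxs, hus]; rw [c]; exact e⟩
  have hlamsum' : ∑ j : Fin (L + 1), lam (Fin.cast hL.symm j) = 1 := by
    rw [← hlamsum]
    exact Fintype.sum_equiv (finCongr hL.symm) _ _ (fun j => rfl)
  obtain ⟨gam, hgam0, hgamsum, hgameq⟩ :=
    hA3 (t + N) L xs us hcond (fun j => lam (Fin.cast hL.symm j)) (fun j => hlam _) hlamsum'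
  refine ⟨fun j => gam (Fin.cast hL j), fun j => hgam0 _, ?_, ?_, ?_, ?_, ?_, ?_, ?_, ?_⟩
  · rw [← hgamsum]
    exact Fintype.sum_equiv (finCongr hL) _ _ (fun j => rfl)
  · have h := hpdyn t le_rfl (by omega)
    rw [h, hinit, ← happl]
    exact hcl.symm
  · exact fun k hk1 hk2 => hpdyn k (by omega) hk2
  · have hsum1 : xbar (t + N) = ∑ j : Fin (L + 1), lam (Fin.cast hL.symm j) • xs j := by
      rw [hterm]
      exact Fintype.sum_equiv (finCongr hL) _ _ (fun j => rfl)
    have hsum2 : (∑ j : Fin (t / P), gam (Fin.cast hL j) • u (t + N - (j.1 + 1) * P))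
        = ∑ j : Fin (L + 1), gam j • us j :=
      Fintype.sum_equiv (finCongr hL) _ _ (fun j => rfl)
    have hsum3 : (∑ j : Fin (L + 1), lam (Fin.cast hL.symm j) • f (t + N) (xs j) (us j))
        = ∑ j : Fin (t / P), lam j • x (t + 1 + N - (j.1 + 1) * P) := by
      rw [show (∑ j : Fin (L + 1), lam (Fin.cast hL.symm j) • f (t + N) (xs j) (us j))
          = ∑ j : Fin (L + 1), lam (Fin.cast hL.symm j) • x (t + 1 + N - (j.1 + 1) * P) from
        Finset.sum_congr rfl (fun j _ => by rw [(hfeas j.1 (hjlt j)).2.2.1])]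
      exact Fintype.sum_equiv (finCongr hL.symm) _ _ (fun j => rfl)
    rw [hsum1, hsum2]
    exact hgameq.trans hsum3
  · exact fun k hk1 hk2 => hpcon k (by omega) hk2
  · rw [hterm]
    exact (hX (t + N)).sum_mem (fun j _ => hlam j) hlamsum (fun j _ => (hfeas j.1 j.2).1)
  · refine (hU (t + N)).sum_mem (fun j _ => hgam0 _) ?_ (fun j _ => (hfeas j.1 j.2).2.1)
    rw [← hgamsum]
    exact Fintype.sum_equiv (finCongr hL) _ _ (fun j => rfl)
  · refine (convex_convexHull ℝ _).sum_mem (fun j _ => hlam j) hlamsum (fun j _ => ?_)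
    refine subset_convexHull ℝ _ ⟨j.1 + 1, by omega, ?_, rfl⟩
    calc j.1 + 1 ≤ t / P := j.2
      _ ≤ (t + 1 + N) / P := Nat.div_le_div_right (by omega)
end

section
/- Recursive feasibility (Theorem 1): suppose a feasible P-periodic initial trajectory x_0, …, x_P with inputs u_0, …, u_{P−1} is given (x_{k+1} = f_k(x_k, u_k), x_k ∈ X_k, u_k ∈ U_k, x_P = x_0), Assumption 3 holds, and for every t ≥ P the closed loop is defined by choosing any feasible plan at time t and applying its first input u_t = ū_t, setting x_{t+1} = f_t(x_t, u_t). Then for every t ≥ P a feasible plan at time t exists (i.e., the LMPC finite-time optimal control problem is feasible for all t ≥ P), and consequently the closed-loop trajectory satisfies x_t ∈ X_t and u_t ∈ U_t for all t ≥ 0. -/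
/-- A plan at time `t` (states `xb`, inputs `ub`, multipliers `lam` indexed by
`j : Fin (t/P)`, representing `λ_{j+1}`) is feasible for the LMPC problem if it starts
at the current state `x t`, satisfies the dynamics and the state and input constraints
over the horizon, and its terminal state is the convex combination
`∑_j λ_j x (t+N-jP)` of the sampled safe set. -/
def FeasPlan {n d : ℕ} (P N : ℕ)
    (f : ℕ → (Fin n → ℝ) → (Fin d → ℝ) → (Fin n → ℝ))
    (X : ℕ → Set (Fin n → ℝ)) (U : ℕ → Set (Fin d → ℝ))
    (x : ℕ → Fin n → ℝ) (t : ℕ)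
    (xb : ℕ → Fin n → ℝ) (ub : ℕ → Fin d → ℝ) (lam : Fin (t / P) → ℝ) : Prop :=
  (∀ j, 0 ≤ lam j) ∧ (∑ j, lam j = 1) ∧
  xb t = x t ∧
  (∀ k, t ≤ k → k < t + N → xb (k + 1) = f k (xb k) (ub k)) ∧
  (∀ k, t ≤ k → k < t + N → xb k ∈ X k ∧ ub k ∈ U k) ∧
  xb (t + N) = ∑ j : Fin (t / P), lam j • x (t + N - (j.1 + 1) * P)

lemma per_gen {α : Sort*} (P : ℕ) (g : ℕ → α) (hg : ∀ t, g (t + P) = g t) :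
    ∀ a m : ℕ, g (a + m * P) = g a := by
  intro a m
  induction m with
  | zero => simp
  | succ m ih =>
    have h : a + (m + 1) * P = (a + m * P) + P := by ring
    rw [h, hg, ih]

lemma pad_sum {E : Type*} [AddCommMonoid E] [Module ℝ E] (M M' : ℕ) (h : M ≤ M')
    (lam : Fin M → ℝ) (g : ℕ → E) :
    ∑ j : Fin M', (if hj : j.1 < M then lam ⟨j.1, hj⟩ else 0) • g j.1
      = ∑ j : Fin M, lam j • g j.1 := by
  have h1 : ∑ j : Fin M, lam j • g j.1
      = ∑ j : Fin M, (if hj : j.1 < M then lam ⟨j.1, hj⟩ else 0) • g j.1 :=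
    Finset.sum_congr rfl (fun j _ => by rw [dif_pos j.2])
  rw [h1,
    Fin.sum_univ_eq_sum_range (fun k => (if hj : k < M then lam ⟨k, hj⟩ else 0) • g k) M',
    Fin.sum_univ_eq_sum_range (fun k => (if hj : k < M then lam ⟨k, hj⟩ else 0) • g k) M]
  exact (Finset.sum_subset (Finset.range_subset_range.2 h) (by
    intro k _ hk
    rw [Finset.mem_range, not_lt] at hk
    rw [dif_neg (by omega), zero_smul])).symm

/-- **Recursive feasibility (Theorem 1).**  Suppose a feasible `P`-periodic initial
trajectory is given, Assumption 3 holds, and for every `t ≥ P` the closed loop applies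
the first input of some feasible plan at time `t` (whenever a feasible plan exists).
Then for every `t ≥ P` a feasible plan at time `t` exists, i.e. the LMPC problem is
feasible for all `t ≥ P`, and consequently the closed-loop trajectory satisfies the
state and input constraints for all `t ≥ 0`. -/
theorem recursive_feasibility {n d : ℕ} (P N : ℕ) (hN : 1 ≤ N) (hNP : N < P)
    (f : ℕ → (Fin n → ℝ) → (Fin d → ℝ) → (Fin n → ℝ))
    (X : ℕ → Set (Fin n → ℝ)) (U : ℕ → Set (Fin d → ℝ))
    (hf : ∀ t, f (t + P) = f t)
    (hX : ∀ t, Convex ℝ (X t)) (hXper : ∀ t, X (t + P) = X t)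
    (hU : ∀ t, Convex ℝ (U t)) (hUper : ∀ t, U (t + P) = U t)
    -- Assumption 3:
    (hA3 : ∀ (t' L : ℕ) (xs : Fin (L + 1) → Fin n → ℝ) (us : Fin (L + 1) → Fin d → ℝ),
      (∀ j, xs j ∈ X t' ∧ us j ∈ U t' ∧ f t' (xs j) (us j) ∈ X (t' + 1)) →
      ∀ lam : Fin (L + 1) → ℝ, (∀ j, 0 ≤ lam j) → (∑ j, lam j = 1) →
        ∃ gam : Fin (L + 1) → ℝ, (∀ j, 0 ≤ gam j) ∧ (∑ j, gam j = 1) ∧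
          f t' (∑ j, lam j • xs j) (∑ j, gam j • us j) = ∑ j, lam j • f t' (xs j) (us j))
    -- closed-loop trajectory and inputs:
    (x : ℕ → Fin n → ℝ) (u : ℕ → Fin d → ℝ)
    -- Assumption 2: feasible `P`-periodic initial trajectory on `0, …, P`:
    (hdyn0 : ∀ k, k < P → x (k + 1) = f k (x k) (u k))
    (hxcon0 : ∀ k, k ≤ P → x k ∈ X k)
    (hucon0 : ∀ k, k < P → u k ∈ U k)
    (hper : x P = x 0)
    -- for `t ≥ P` the closed loop applies the first input of some feasible plan:
    (hsel : ∀ t, P ≤ t →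
      (∃ xb ub lam, FeasPlan P N f X U x t xb ub lam) →
      ∃ xb ub lam, FeasPlan P N f X U x t xb ub lam ∧ u t = ub t)
    (hcl : ∀ t, P ≤ t → x (t + 1) = f t (x t) (u t)) :
    (∀ t, P ≤ t → ∃ xb ub lam, FeasPlan P N f X U x t xb ub lam) ∧
    (∀ t, x t ∈ X t) ∧ (∀ t, u t ∈ U t) := by
  have hP : 0 < P := by omega
  have hdynAll : ∀ k, x (k + 1) = f k (x k) (u k) := by
    intro k
    rcases lt_or_ge k P with h | h
    · exact hdyn0 k h
    · exact hcl k h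
  have main : ∀ t, P ≤ t → ∃ xb ub lam, FeasPlan P N f X U x t xb ub lam := by
    intro t
    induction t using Nat.strong_induction_on with
    | _ t IH =>
      intro ht
      rcases eq_or_lt_of_le ht with hEq | hlt
      · -- base case t = P
        subst hEq
        have hPP : P / P = 1 := Nat.div_self hP
        refine ⟨fun k => x (k - P), fun k => u (k - P), fun _ => 1, ?_, ?_, ?_, ?_, ?_, ?_⟩
        · intro j; norm_num
        · rw [Finset.sum_const, Finset.card_univ, Fintype.card_fin, hPP]
          simp
        · simp [Nat.sub_self, hper]
        · intro k hk1 hk2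
          have h2 : k - P < P := by omega
          show x (k + 1 - P) = f k (x (k - P)) (u (k - P))
          rw [show k + 1 - P = (k - P) + 1 by omega, hdyn0 _ h2]
          have h4 : f k = f (k - P) := by
            conv_lhs => rw [show k = (k - P) + P by omega]
            exact hf _
          rw [h4]
        · intro k hk1 hk2
          constructor
          · show x (k - P) ∈ X k
            have h3 : X k = X (k - P) := by
              conv_lhs => rw [show k = (k - P) + P by omega]
              exact hXper _
            rw [h3]; exact hxcon0 _ (by omega)
          · show u (k - P) ∈ U k
            have h3 : U k = U (k - P) := by
              conv_lhs => rw [show k = (k - P) + P by omega]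
              exact hUper _
            rw [h3]; exact hucon0 _ (by omega)
        · show x (P + N - P) = ∑ j : Fin (P / P), (1 : ℝ) • x (P + N - (j.1 + 1) * P)
          have hterm : ∀ j : Fin (P / P),
              (1 : ℝ) • x (P + N - (j.1 + 1) * P) = x (P + N - P) := by
            intro j
            have hj : j.1 = 0 := Nat.lt_one_iff.mp (lt_of_lt_of_le j.2 hPP.le)
            have h6 : P + N - (j.1 + 1) * P = P + N - P := by rw [hj]; omega
            rw [h6]
            exact one_smul ℝ _
          rw [Finset.sum_congr rfl (fun j _ => hterm j), Finset.sum_const, Finset.card_univ,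
            Fintype.card_fin, hPP]
          simp
      · -- inductive step: t = s + 1, s ≥ P
        obtain ⟨s, rfl⟩ : ∃ s, t = s + 1 := ⟨t - 1, by omega⟩
        have hs : P ≤ s := by omega
        obtain ⟨xb, ub, lam, hfp, hu⟩ := hsel s hs (IH s (by omega) hs)
        obtain ⟨hl0, hl1, hinit, hdynp, hconp, hterm⟩ := hfp
        -- state/input constraint satisfaction up to time s
        have mem : ∀ k, k ≤ s → x k ∈ X k ∧ u k ∈ U k := by
          intro k hk
          rcases lt_or_ge k P with h | h
          · exact ⟨hxcon0 k (le_of_lt h), hucon0 k h⟩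
          · rcases lt_or_eq_of_le hk with hlt' | heq
            · obtain ⟨xb', ub', lam', hfp', hu'⟩ := hsel k h (IH k (by omega) h)
              obtain ⟨_, _, hinit', _, hcon', _⟩ := hfp'
              have hk' := hcon' k le_rfl (by omega)
              refine ⟨?_, ?_⟩
              · rw [← hinit']; exact hk'.1
              · rw [hu']; exact hk'.2
            · subst heq
              have hk' := hconp k le_rfl (by omega)
              refine ⟨?_, ?_⟩
              · rw [← hinit]; exact hk'.1
              · rw [hu]; exact hk'.2
        have hM1 : 1 ≤ s / P := (Nat.one_le_div_iff hP).2 hs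
        have hjPm : ∀ m : ℕ, m < s / P → (m + 1) * P ≤ s := by
          intro m hm
          calc (m + 1) * P ≤ (s / P) * P := Nat.mul_le_mul_right P (by omega)
          _ ≤ s := Nat.div_mul_le_self s P
        have hjPm' : ∀ m : ℕ, m < s / P → P ≤ (m + 1) * P :=
          fun m _ => Nat.le_mul_of_pos_left P (Nat.succ_pos m)
        have hXm : ∀ m : ℕ, m < s / P → x (s + N - (m + 1) * P) ∈ X (s + N) := by
          intro m hm
          have h1 := hjPm m hm
          have h2 := hjPm' m hm
          have h3 : X (s + N) = X (s + N - (m + 1) * P) := by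
            conv_lhs => rw [show s + N = (s + N - (m + 1) * P) + (m + 1) * P by omega]
            exact per_gen P X hXper _ _
          rw [h3]
          exact (mem _ (by omega)).1
        have hUm : ∀ m : ℕ, m < s / P → u (s + N - (m + 1) * P) ∈ U (s + N) := by
          intro m hm
          have h1 := hjPm m hm
          have h2 := hjPm' m hm
          have h3 : U (s + N) = U (s + N - (m + 1) * P) := by
            conv_lhs => rw [show s + N = (s + N - (m + 1) * P) + (m + 1) * P by omega]
            exact per_gen P U hUper _ _
          rw [h3]
          exact (mem _ (by omega)).2
        have hfm : ∀ m : ℕ, m < s / P →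
            f (s + N) (x (s + N - (m + 1) * P)) (u (s + N - (m + 1) * P))
              = x (s + N + 1 - (m + 1) * P) := by
          intro m hm
          have h1 := hjPm m hm
          have h2 := hjPm' m hm
          have h3 : f (s + N) = f (s + N - (m + 1) * P) := by
            conv_lhs => rw [show s + N = (s + N - (m + 1) * P) + (m + 1) * P by omega]
            exact per_gen P f hf _ _
          have h4 : s + N + 1 - (m + 1) * P = (s + N - (m + 1) * P) + 1 := by omega
          rw [h3, h4, hdynAll]
        have hXm' : ∀ m : ℕ, m < s / P → x (s + N + 1 - (m + 1) * P) ∈ X (s + N + 1) := by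
          intro m hm
          have h1 := hjPm m hm
          have h2 := hjPm' m hm
          have h3 : X (s + N + 1) = X (s + N + 1 - (m + 1) * P) := by
            conv_lhs => rw [show s + N + 1 = (s + N + 1 - (m + 1) * P) + (m + 1) * P by omega]
            exact per_gen P X hXper _ _
          rw [h3]
          exact (mem _ (by omega)).1
        obtain ⟨L, hL⟩ : ∃ L, s / P = L + 1 := ⟨s / P - 1, by omega⟩
        have hjlt : ∀ j : Fin (L + 1), j.1 < s / P := fun j => by have := j.2; omega
        obtain ⟨gam, hg0, hg1, hgeq⟩ := hA3 (s + N) L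
          (fun j => x (s + N - (j.1 + 1) * P)) (fun j => u (s + N - (j.1 + 1) * P))
          (fun j => ⟨hXm j.1 (hjlt j), hUm j.1 (hjlt j), by
            show f (s + N) (x (s + N - (j.1 + 1) * P)) (u (s + N - (j.1 + 1) * P))
              ∈ X (s + N + 1)
            rw [hfm j.1 (hjlt j)]
            exact hXm' j.1 (hjlt j)⟩)
          (fun j => lam (finCongr hL.symm j)) (fun j => hl0 _)
          ((Fintype.sum_equiv (finCongr hL.symm) _ lam (fun j => rfl)).trans hl1)
        have hgeq' : f (s + N)
            (∑ j : Fin (L + 1), lam (finCongr hL.symm j) • x (s + N - (j.1 + 1) * P))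
            (∑ j : Fin (L + 1), gam j • u (s + N - (j.1 + 1) * P))
            = ∑ j : Fin (L + 1),
                lam (finCongr hL.symm j) •
                  f (s + N) (x (s + N - (j.1 + 1) * P)) (u (s + N - (j.1 + 1) * P)) := hgeq
        set w : Fin d → ℝ := ∑ j : Fin (L + 1), gam j • u (s + N - (j.1 + 1) * P) with hw
        set Z : Fin n → ℝ := f (s + N) (xb (s + N)) w with hZdef
        have sum_eq1 : ∑ j : Fin (L + 1), lam (finCongr hL.symm j) • x (s + N - (j.1 + 1) * P)
            = ∑ j : Fin (s / P), lam j • x (s + N - (j.1 + 1) * P) :=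
          Fintype.sum_equiv (finCongr hL.symm) _ _ (fun j => rfl)
        have hZval : Z = ∑ j : Fin (s / P), lam j • x (s + N + 1 - (j.1 + 1) * P) :=
          calc Z = f (s + N) (xb (s + N)) w := hZdef
          _ = f (s + N)
              (∑ j : Fin (L + 1), lam (finCongr hL.symm j) • x (s + N - (j.1 + 1) * P)) w := by
            rw [hterm, ← sum_eq1]
          _ = ∑ j : Fin (L + 1),
                lam (finCongr hL.symm j) •
                  f (s + N) (x (s + N - (j.1 + 1) * P)) (u (s + N - (j.1 + 1) * P)) := hgeq'
          _ = ∑ j : Fin (L + 1), lam (finCongr hL.symm j) • x (s + N + 1 - (j.1 + 1) * P) :=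
            Finset.sum_congr rfl (fun j _ => by rw [hfm j.1 (hjlt j)])
          _ = ∑ j : Fin (s / P), lam j • x (s + N + 1 - (j.1 + 1) * P) :=
            Fintype.sum_equiv (finCongr hL.symm) _ _ (fun j => rfl)
        have hMM' : s / P ≤ (s + 1) / P := Nat.div_le_div_right (by omega)
        -- the shifted plan
        refine ⟨fun k => if k = s + 1 + N then Z else xb k,
          fun k => if k = s + N then w else ub k,
          fun j => if hj : j.1 < s / P then lam ⟨j.1, hj⟩ else 0, ?_, ?_, ?_, ?_, ?_, ?_⟩
        · intro j
          show (0 : ℝ) ≤ if hj : j.1 < s / P then lam ⟨j.1, hj⟩ else 0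
          split
          · exact hl0 _
          · exact le_rfl
        · have hpad : (∑ j : Fin ((s + 1) / P),
              (if hj : j.1 < s / P then lam ⟨j.1, hj⟩ else 0)) = ∑ j : Fin (s / P), lam j := by
            have h5 := pad_sum (s / P) ((s + 1) / P) hMM' lam (fun _ => (1 : ℝ))
            simpa using h5
          exact hpad.trans hl1
        · show (if s + 1 = s + 1 + N then Z else xb (s + 1)) = x (s + 1)
          rw [if_neg (by omega)]
          rw [hdynp s le_rfl (by omega), hinit, ← hu]
          exact (hcl s hs).symm
        · intro k hk1 hk2
          rcases eq_or_lt_of_le (show k ≤ s + N by omega) with hke | hklt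
          · subst hke
            show (if s + N + 1 = s + 1 + N then Z else xb (s + N + 1))
              = f (s + N) (if s + N = s + 1 + N then Z else xb (s + N))
                  (if s + N = s + N then w else ub (s + N))
            rw [if_pos (show s + N + 1 = s + 1 + N by omega),
              if_neg (show ¬ s + N = s + 1 + N by omega),
              if_pos (show s + N = s + N from rfl)]
          · show (if k + 1 = s + 1 + N then Z else xb (k + 1))
              = f k (if k = s + 1 + N then Z else xb k) (if k = s + N then w else ub k)
            rw [if_neg (by omega), if_neg (by omega), if_neg (by omega)]
            exact hdynp k (by omega) (by omega)
        · intro k hk1 hk2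
          rcases eq_or_lt_of_le (show k ≤ s + N by omega) with hke | hklt
          · subst hke
            constructor
            · show (if s + N = s + 1 + N then Z else xb (s + N)) ∈ X (s + N)
              rw [if_neg (show ¬ s + N = s + 1 + N by omega)]
              rw [hterm]
              exact (hX (s + N)).sum_mem (fun j _ => hl0 j) hl1 (fun j _ => hXm j.1 j.2)
            · show (if s + N = s + N then w else ub (s + N)) ∈ U (s + N)
              rw [if_pos (show s + N = s + N from rfl), hw]
              exact (hU (s + N)).sum_mem (fun j _ => hg0 j) hg1 (fun j _ => hUm j.1 (hjlt j))
          · constructor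
            · show (if k = s + 1 + N then Z else xb k) ∈ X k
              rw [if_neg (by omega)]
              exact (hconp k (by omega) (by omega)).1
            · show (if k = s + N then w else ub k) ∈ U k
              rw [if_neg (by omega)]
              exact (hconp k (by omega) (by omega)).2
        · show (if s + 1 + N = s + 1 + N then Z else xb (s + 1 + N))
            = ∑ j : Fin ((s + 1) / P),
                (if hj : j.1 < s / P then lam ⟨j.1, hj⟩ else 0) • x (s + 1 + N - (j.1 + 1) * P)
          rw [if_pos rfl]
          have hpad := pad_sum (s / P) ((s + 1) / P) hMM' lam
            (fun k => x (s + 1 + N - (k + 1) * P))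
          refine (hZval.trans ?_).trans hpad.symm
          exact Finset.sum_congr rfl (fun j _ => by
            rw [show s + N + 1 - (j.1 + 1) * P = s + 1 + N - (j.1 + 1) * P from by omega])
  refine ⟨main, ?_, ?_⟩
  · intro t
    rcases le_or_gt t P with h | h
    · exact hxcon0 t h
    · obtain ⟨xb, ub, lam, _, _, hinit, _, hcon, _⟩ := main t h.le
      have h1 := (hcon t le_rfl (by omega)).1
      rwa [hinit] at h1
  · intro t
    rcases lt_or_ge t P with h | h
    · exact hucon0 t h
    · obtain ⟨xb, ub, lam, ⟨_, _, _, _, hcon, _⟩, hu⟩ := hsel t h (main t h)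
      have h1 := (hcon t le_rfl (by omega)).2
      rwa [← hu] at h1
end

section
/- Cost-decrease inequality for the candidate plan: suppose the closed-loop history satisfies x_{k+1} = f_k(x_k, u_k) for k ≤ t, the stage costs h_k : ℝ^n × ℝ^d → ℝ are jointly convex and P-periodic (h_{k+P} = h_k), and a feasible plan at time t is given with states x̄_t, …, x̄_{t+N}, inputs ū_t, …, ū_{t+N−1}, multipliers λ_1, …, λ_M ≥ 0, Σ_{j=1}^M λ_j = 1, where x̄_t = x_t and the applied closed-loop input equals the plan's first input, u_t = ū_t. Then Σ_{k=t}^{t+N−1} h_k(x̄_k, ū_k) + Σ_{j=1}^M λ_j J_t(x_{t+N−jP}) ≥ Σ_{k=t+1}^{t+N−1} h_k(x̄_k, ū_k) + h_{t+N}(Σ_{j=1}^M λ_j x_{t+N−jP}, Σ_{j=1}^M λ_j u_{t+N−jP}) + Σ_{j=1}^M λ_j J_{t+1}(x_{t+N−jP+1}). -/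
/-- **Cost-decrease inequality for the candidate plan.**
Suppose the closed-loop history satisfies the dynamics up to time `t`, the stage costs
`h k` are jointly convex and `P`-periodic, and a feasible plan at time `t` is given
(states `x̄`, inputs `ū`, multipliers `λ_j ≥ 0` summing to one, with `x̄ t = x t` and
`u t = ū t`).  With the return-cost `J t i = ∑_{k=i}^{t-1} h k (x k) (u k)`, the plan
cost at time `t` dominates the cost of the shifted candidate plan at time `t + 1`:
`∑_{k=t}^{t+N-1} h k (x̄ k) (ū k) + ∑_j λ_j J t (t+N-jP)
  ≥ ∑_{k=t+1}^{t+N-1} h k (x̄ k) (ū k)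
    + h (t+N) (∑_j λ_j x (t+N-jP), ∑_j λ_j u (t+N-jP))
    + ∑_j λ_j J (t+1) (t+N-jP+1)`. -/
theorem cost_decrease_candidate_plan {n d : ℕ} (P N : ℕ) (hN : 1 ≤ N) (hNP : N < P)
    (f : ℕ → (Fin n → ℝ) → (Fin d → ℝ) → (Fin n → ℝ))
    (h : ℕ → (Fin n → ℝ) → (Fin d → ℝ) → ℝ)
    (hconv : ∀ k, ConvexOn ℝ Set.univ
      (fun p : (Fin n → ℝ) × (Fin d → ℝ) => h k p.1 p.2))
    (hper : ∀ k, h (k + P) = h k)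
    (x : ℕ → Fin n → ℝ) (u : ℕ → Fin d → ℝ) (t : ℕ)
    (hhist : ∀ k, k ≤ t → x (k + 1) = f k (x k) (u k))
    (hM : 1 ≤ t / P)
    (xbar : ℕ → Fin n → ℝ) (ubar : ℕ → Fin d → ℝ) (lam : Fin (t / P) → ℝ)
    (hlam : ∀ j, 0 ≤ lam j) (hlamsum : ∑ j, lam j = 1)
    (hinit : xbar t = x t)
    (hpdyn : ∀ k, t ≤ k → k < t + N → xbar (k + 1) = f k (xbar k) (ubar k))
    (hterm : xbar (t + N) = ∑ j : Fin (t / P), lam j • x (t + N - (j.1 + 1) * P))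
    (happl : u t = ubar t)
    (J : ℕ → ℕ → ℝ)
    (hJ : ∀ s i, J s i = ∑ k ∈ Finset.Ico i s, h k (x k) (u k)) :
    (∑ k ∈ Finset.Ico t (t + N), h k (xbar k) (ubar k))
        + ∑ j : Fin (t / P), lam j * J t (t + N - (j.1 + 1) * P)
      ≥ (∑ k ∈ Finset.Ico (t + 1) (t + N), h k (xbar k) (ubar k))
        + h (t + N) (∑ j : Fin (t / P), lam j • x (t + N - (j.1 + 1) * P))
            (∑ j : Fin (t / P), lam j • u (t + N - (j.1 + 1) * P))
        + ∑ j : Fin (t / P), lam j * J (t + 1) (t + N - (j.1 + 1) * P + 1) := by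
  have hper' : ∀ m k, h (k + m * P) = h k := by
    intro m
    induction m with
    | zero => simp
    | succ m ih =>
      intro k
      have e : k + (m + 1) * P = (k + m * P) + P := by ring
      rw [e, hper, ih]
  have hjP : ∀ j : Fin (t / P), (j.1 + 1) * P ≤ t := by
    intro j
    calc (j.1 + 1) * P ≤ (t / P) * P := Nat.mul_le_mul_right _ j.2
      _ ≤ t := Nat.div_mul_le_self t P
  set i : Fin (t / P) → ℕ := fun j => t + N - (j.1 + 1) * P with hi
  have hilt : ∀ j, i j < t := by
    intro j
    have h1 := hjP j
    have h1P : P ≤ (j.1 + 1) * P := Nat.le_mul_of_pos_left _ (Nat.succ_pos _)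
    simp only [hi]
    omega
  have hieq : ∀ j, i j + (j.1 + 1) * P = t + N := by
    intro j
    have h1 := hjP j
    simp only [hi]
    omega
  have hhi : ∀ j, h (t + N) = h (i j) := by
    intro j
    rw [← hieq j, hper']
  -- split first sum
  have hsplit : ∑ k ∈ Finset.Ico t (t + N), h k (xbar k) (ubar k)
      = h t (xbar t) (ubar t) + ∑ k ∈ Finset.Ico (t + 1) (t + N), h k (xbar k) (ubar k) :=
    Finset.sum_eq_sum_Ico_succ_bot (by omega) _
  -- return-cost relation
  have hJrel : ∀ j, J t (i j) + h t (x t) (u t)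
      = h (i j) (x (i j)) (u (i j)) + J (t + 1) (i j + 1) := by
    intro j
    rw [hJ, hJ, Finset.sum_eq_sum_Ico_succ_bot (hilt j),
      Finset.sum_Ico_succ_top (by have := hilt j; omega : i j + 1 ≤ t)]
    ring
  -- Jensen
  have hsum : ∑ j, lam j • ((x (i j), u (i j)) : (Fin n → ℝ) × (Fin d → ℝ))
      = (∑ j, lam j • x (i j), ∑ j, lam j • u (i j)) := by
    apply Prod.ext <;> simp [Prod.fst_sum, Prod.snd_sum]
  have jensen : h (t + N) (∑ j, lam j • x (i j)) (∑ j, lam j • u (i j))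
      ≤ ∑ j, lam j * h (t + N) (x (i j)) (u (i j)) := by
    have := (hconv (t + N)).map_sum_le (p := fun j => (x (i j), u (i j)))
      (fun j _ => hlam j) hlamsum (fun j _ => Set.mem_univ _)
    rw [hsum] at this
    exact this
  have hsumrel : (∑ j, lam j * J t (i j)) + h t (x t) (u t)
      = (∑ j, lam j * h (t + N) (x (i j)) (u (i j)))
        + ∑ j, lam j * J (t + 1) (i j + 1) := by
    calc (∑ j, lam j * J t (i j)) + h t (x t) (u t)
        = ∑ j, lam j * (J t (i j) + h t (x t) (u t)) := by
          simp [mul_add, Finset.sum_add_distrib, ← Finset.sum_mul, hlamsum]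
      _ = ∑ j, lam j * (h (t + N) (x (i j)) (u (i j)) + J (t + 1) (i j + 1)) := by
          refine Finset.sum_congr rfl fun j _ => ?_
          rw [hJrel j, hhi j]
      _ = _ := by simp [mul_add, Finset.sum_add_distrib]
  rw [hsplit, hinit, ← happl]
  linarith [jensen, hsumrel]
end

section
/- Non-increasing cost for linear time-varying systems (Theorem 2): consider the P-periodic linear time-varying system x_{t+1} = A_t x_t + B_t u_t under Assumptions 1–2, in closed loop with the LMPC that at each time t ≥ P applies the first input of an optimal plan. Suppose that at times t and t+1 optimal plans exist (the minimum of the plan cost over all feasible plans is attained). Then the optimal values satisfy J^LMPC_{t→t+N}(x_t) ≥ J^LMPC_{t+1→t+1+N}(x_{t+1}) for all t ≥ P. -/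
open Matrix

/-- A feasible plan at time `t` for the LMPC problem with the linear time-varying
dynamics `x (k+1) = A k *ᵥ x k + B k *ᵥ u k`: it starts at the current state `x t`,
satisfies the dynamics and the state and input constraints over the horizon `N`, and
its terminal state is the convex combination `∑_j λ_j x (t+N-jP)` (with `j = 1, …, M`,
`M = ⌊t/P⌋`) of states in the sampled safe set. -/
def FeasPlanLTV {n d : ℕ} (P N : ℕ)
    (A : ℕ → Matrix (Fin n) (Fin n) ℝ) (B : ℕ → Matrix (Fin n) (Fin d) ℝ)
    (X : ℕ → Set (Fin n → ℝ)) (U : ℕ → Set (Fin d → ℝ))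
    (x : ℕ → Fin n → ℝ) (t : ℕ)
    (xb : ℕ → Fin n → ℝ) (ub : ℕ → Fin d → ℝ) (lam : Fin (t / P) → ℝ) : Prop :=
  (∀ j, 0 ≤ lam j) ∧ (∑ j, lam j = 1) ∧
  xb t = x t ∧
  (∀ k, t ≤ k → k < t + N → xb (k + 1) = A k *ᵥ xb k + B k *ᵥ ub k) ∧
  (∀ k, t ≤ k → k < t + N → xb k ∈ X k ∧ ub k ∈ U k) ∧
  xb (t + N) = ∑ j : Fin (t / P), lam j • x (t + N - (j.1 + 1) * P)

/-- The cost of a plan at time `t`: the sum of the stage costs over the horizon plus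
the `Q`-function value `∑_j λ_j J_t(x (t+N-jP))`, where
`J t i = ∑_{k=i}^{t-1} h k (x k) (u k)` is the return-cost. -/
def PlanCost {n d : ℕ} (P N : ℕ)
    (h : ℕ → (Fin n → ℝ) → (Fin d → ℝ) → ℝ)
    (x : ℕ → Fin n → ℝ) (u : ℕ → Fin d → ℝ) (t : ℕ)
    (xb : ℕ → Fin n → ℝ) (ub : ℕ → Fin d → ℝ) (lam : Fin (t / P) → ℝ) : ℝ :=
  (∑ k ∈ Finset.Ico t (t + N), h k (xb k) (ub k))
    + ∑ j : Fin (t / P), lam j *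
        ∑ k ∈ Finset.Ico (t + N - (j.1 + 1) * P) t, h k (x k) (u k)

private lemma periodize {α : Type*} {P : ℕ} (f : ℕ → α) (hf : ∀ t, f (t + P) = f t) :
    ∀ (m s : ℕ), f (s + m * P) = f s := by
  intro m
  induction m with
  | zero => simp
  | succ m ih =>
    intro s
    have e : s + (m + 1) * P = s + m * P + P := by ring
    rw [e, hf, ih]

private lemma extend_sum {V : Type*} [AddCommMonoid V] [Module ℝ V] {M M' : ℕ}
    (hMM : M ≤ M') (lamN : ℕ → ℝ) (hz : ∀ j, M ≤ j → lamN j = 0) (g : ℕ → V) :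
    ∑ j : Fin M', lamN j.1 • g j.1 = ∑ j : Fin M, lamN j.1 • g j.1 := by
  rw [Fin.sum_univ_eq_sum_range (fun j => lamN j • g j) M',
      Fin.sum_univ_eq_sum_range (fun j => lamN j • g j) M]
  exact (Finset.sum_subset (Finset.range_subset_range.2 hMM) (fun j _ hj => by
    rw [hz j (by simpa using hj), zero_smul])).symm

/-- **Non-increasing cost for linear time-varying systems (Theorem 2).**
Consider the `P`-periodic LTV system under Assumptions 1–2 in closed loop with the LMPC
that at each time `t ≥ P` applies the first input of an optimal plan, where the optimal
value `J^LMPC = vstar t` is attained.  Then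
`J^LMPC_{t→t+N}(x t) ≥ J^LMPC_{t+1→t+1+N}(x (t+1))` for all `t ≥ P`. -/
theorem lmpc_nonincreasing_cost_ltv {n d : ℕ} (P N : ℕ) (hN : 1 ≤ N) (hNP : N < P)
    (A : ℕ → Matrix (Fin n) (Fin n) ℝ) (B : ℕ → Matrix (Fin n) (Fin d) ℝ)
    (hA : ∀ t, A (t + P) = A t) (hB : ∀ t, B (t + P) = B t)
    (X : ℕ → Set (Fin n → ℝ)) (U : ℕ → Set (Fin d → ℝ))
    -- Assumption 1:
    (hX : ∀ t, Convex ℝ (X t)) (hXper : ∀ t, X (t + P) = X t)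
    (hU : ∀ t, Convex ℝ (U t)) (hUper : ∀ t, U (t + P) = U t)
    (h : ℕ → (Fin n → ℝ) → (Fin d → ℝ) → ℝ)
    (hconv : ∀ k, ConvexOn ℝ Set.univ
      (fun p : (Fin n → ℝ) × (Fin d → ℝ) => h k p.1 p.2))
    (hhper : ∀ k, h (k + P) = h k)
    -- closed-loop trajectory and inputs:
    (x : ℕ → Fin n → ℝ) (u : ℕ → Fin d → ℝ)
    -- Assumption 2: feasible `P`-periodic initial trajectory on `0, …, P`:
    (hdyn0 : ∀ k, k < P → x (k + 1) = A k *ᵥ x k + B k *ᵥ u k)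
    (hxcon0 : ∀ k, k ≤ P → x k ∈ X k)
    (hucon0 : ∀ k, k < P → u k ∈ U k)
    (hper0 : x P = x 0)
    -- the LMPC optimal value `vstar t` is attained for every `t ≥ P`:
    (vstar : ℕ → ℝ)
    (hopt : ∀ t, P ≤ t → IsLeast
      {c : ℝ | ∃ xb ub lam, FeasPlanLTV P N A B X U x t xb ub lam ∧
        PlanCost P N h x u t xb ub lam = c} (vstar t))
    -- the closed loop applies the first input of an optimal plan:
    (hsel : ∀ t, P ≤ t → ∃ xb ub lam,
      FeasPlanLTV P N A B X U x t xb ub lam ∧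
      PlanCost P N h x u t xb ub lam = vstar t ∧ u t = ub t)
    (hcl : ∀ t, P ≤ t → x (t + 1) = A t *ᵥ x t + B t *ᵥ u t) :
    ∀ t, P ≤ t → vstar t ≥ vstar (t + 1) := by
  have hP : 0 < P := by omega
  -- closed-loop facts for all times
  have hxmem : ∀ s, x s ∈ X s := by
    intro s
    rcases lt_or_ge s P with hs | hs
    · exact hxcon0 s hs.le
    · obtain ⟨xb, ub, lam, ⟨_, _, hinit, _, hcon, _⟩, _⟩ := hsel s hs
      have := (hcon s le_rfl (by omega)).1
      rwa [hinit] at this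
  have humem : ∀ s, u s ∈ U s := by
    intro s
    rcases lt_or_ge s P with hs | hs
    · exact hucon0 s hs
    · obtain ⟨xb, ub, lam, ⟨_, _, _, _, hcon, _⟩, _, hu⟩ := hsel s hs
      rw [hu]; exact (hcon s le_rfl (by omega)).2
  have hdynall : ∀ s, x (s + 1) = A s *ᵥ x s + B s *ᵥ u s := by
    intro s
    rcases lt_or_ge s P with hs | hs
    · exact hdyn0 s hs
    · exact hcl s hs
  intro t ht
  obtain ⟨xb, ub, lam, hfeas, hcost, hu⟩ := hsel t ht
  obtain ⟨hlam0, hlamsum, hinit, hdyn, hcon, hterm⟩ := hfeas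
  -- index facts
  have hjP : ∀ j : Fin (t / P), (j.1 + 1) * P ≤ t ∧ P ≤ (j.1 + 1) * P := by
    intro j
    constructor
    · calc (j.1 + 1) * P ≤ (t / P) * P := Nat.mul_le_mul_right P j.2
        _ ≤ t := Nat.div_mul_le_self t P
    · exact Nat.le_mul_of_pos_left P (Nat.succ_pos _)
  -- extended multipliers
  have hMM' : t / P ≤ (t + 1) / P := Nat.div_le_div_right (by omega)
  set lamN : ℕ → ℝ := fun j => if hj : j < t / P then lam ⟨j, hj⟩ else 0 with hlamN
  have hlamN_eq : ∀ j : Fin (t / P), lamN j.1 = lam j := fun j => dif_pos j.2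
  have hlamN_zero : ∀ j, t / P ≤ j → lamN j = 0 := fun j hj => dif_neg (Nat.not_lt.2 hj)
  -- candidate plan at time t+1
  set xb' : ℕ → Fin n → ℝ := fun k =>
    if t + N + 1 ≤ k then (∑ j : Fin (t / P), lam j • x (t + 1 + N - (j.1 + 1) * P)) else xb k
    with hxb'
  set ub' : ℕ → Fin d → ℝ := fun k =>
    if t + N ≤ k then (∑ j : Fin (t / P), lam j • u (t + N - (j.1 + 1) * P)) else ub k
    with hub'
  set lam' : Fin ((t + 1) / P) → ℝ := fun j => lamN j.1 with hlam'
  -- basic evaluations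
  have hxb'_lt : ∀ k, k ≤ t + N → xb' k = xb k := by
    intro k hk; simp only [hxb']; rw [if_neg (show ¬ (t + N + 1 ≤ k) by omega)]
  have hub'_lt : ∀ k, k < t + N → ub' k = ub k := by
    intro k hk; simp only [hub']; rw [if_neg (show ¬ (t + N ≤ k) by omega)]
  have hxb'_top : xb' (t + 1 + N) = ∑ j : Fin (t / P), lam j • x (t + 1 + N - (j.1 + 1) * P) := by
    simp only [hxb']; rw [if_pos (show t + N + 1 ≤ t + 1 + N by omega)]
  have hub'_top : ub' (t + N) = ∑ j : Fin (t / P), lam j • u (t + N - (j.1 + 1) * P) := by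
    simp only [hub']; rw [if_pos (le_refl (t + N))]
  -- periodicity at shifted indices
  have hAper : ∀ j : Fin (t / P), A (t + N) = A (t + N - (j.1 + 1) * P) := by
    intro j
    have := periodize A hA (j.1 + 1) (t + N - (j.1 + 1) * P)
    rwa [show t + N - (j.1 + 1) * P + (j.1 + 1) * P = t + N by
      have := (hjP j).1; omega] at this
  have hBper : ∀ j : Fin (t / P), B (t + N) = B (t + N - (j.1 + 1) * P) := by
    intro j
    have := periodize B hB (j.1 + 1) (t + N - (j.1 + 1) * P)
    rwa [show t + N - (j.1 + 1) * P + (j.1 + 1) * P = t + N by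
      have := (hjP j).1; omega] at this
  have hXperj : ∀ j : Fin (t / P), X (t + N) = X (t + N - (j.1 + 1) * P) := by
    intro j
    have := periodize X hXper (j.1 + 1) (t + N - (j.1 + 1) * P)
    rwa [show t + N - (j.1 + 1) * P + (j.1 + 1) * P = t + N by
      have := (hjP j).1; omega] at this
  have hUperj : ∀ j : Fin (t / P), U (t + N) = U (t + N - (j.1 + 1) * P) := by
    intro j
    have := periodize U hUper (j.1 + 1) (t + N - (j.1 + 1) * P)
    rwa [show t + N - (j.1 + 1) * P + (j.1 + 1) * P = t + N by
      have := (hjP j).1; omega] at this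
  have hhperj : ∀ j : Fin (t / P), h (t + N) = h (t + N - (j.1 + 1) * P) := by
    intro j
    have := periodize h hhper (j.1 + 1) (t + N - (j.1 + 1) * P)
    rwa [show t + N - (j.1 + 1) * P + (j.1 + 1) * P = t + N by
      have := (hjP j).1; omega] at this
  have mulvec_sum : ∀ {m : ℕ} (C : Matrix (Fin n) (Fin m) ℝ) (v : Fin (t / P) → (Fin m → ℝ)),
      C *ᵥ (∑ j, lam j • v j) = ∑ j, lam j • (C *ᵥ v j) := by
    intro m C v
    simp only [← Matrix.mulVecLin_apply, map_sum, _root_.map_smul]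
  -- xb (t+1) equals closed-loop x (t+1)
  have hx1 : xb (t + 1) = x (t + 1) := by
    rw [hdyn t le_rfl (by omega), hinit, hcl t ht, hu]
  -- feasibility of the candidate plan
  have hfeas' : FeasPlanLTV P N A B X U x (t + 1) xb' ub' lam' := by
    refine ⟨?_, ?_, ?_, ?_, ?_, ?_⟩
    · intro j
      simp only [hlam', hlamN]
      split
      · exact hlam0 _
      · exact le_rfl
    · have := extend_sum (V := ℝ) hMM' lamN hlamN_zero (fun _ => (1 : ℝ))
      simp only [smul_eq_mul, mul_one] at this
      rw [hlam']
      rw [this]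
      rw [← hlamsum]
      exact Finset.sum_congr rfl fun j _ => hlamN_eq j
    · rw [hxb'_lt (t + 1) (by omega), hx1]
    · intro k hk1 hk2
      rcases eq_or_lt_of_le (Nat.lt_succ_iff.mp (by omega : k < t + N + 1)) with hk | hk
      · -- k = t + N
        subst hk
        rw [show t + N + 1 = t + 1 + N by omega, hxb'_top,
          hxb'_lt (t + N) le_rfl, hterm, hub'_top, mulvec_sum, mulvec_sum,
          ← Finset.sum_add_distrib]
        refine Finset.sum_congr rfl fun j _ => ?_
        rw [← smul_add, hAper j, hBper j, ← hdynall (t + N - (j.1 + 1) * P),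
          show t + N - (j.1 + 1) * P + 1 = t + 1 + N - (j.1 + 1) * P from by
            have := (hjP j).1; omega]
      · -- t + 1 ≤ k < t + N
        rw [hxb'_lt (k + 1) (by omega), hxb'_lt k (by omega), hub'_lt k hk]
        exact hdyn k (by omega) hk
    · intro k hk1 hk2
      rcases eq_or_lt_of_le (Nat.lt_succ_iff.mp (by omega : k < t + N + 1)) with hk | hk
      · subst hk
        constructor
        · rw [hxb'_lt (t + N) le_rfl, hterm]
          refine (hX (t + N)).sum_mem (fun j _ => hlam0 j) hlamsum (fun j _ => ?_)
          rw [hXperj j]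
          exact hxmem _
        · rw [hub'_top]
          refine (hU (t + N)).sum_mem (fun j _ => hlam0 j) hlamsum (fun j _ => ?_)
          rw [hUperj j]
          exact humem _
      · rw [hxb'_lt k (by omega), hub'_lt k hk]
        exact hcon k (by omega) hk
    · rw [hxb'_top]
      rw [hlam']
      rw [extend_sum hMM' lamN hlamN_zero (fun j => x (t + 1 + N - (j + 1) * P))]
      exact (Finset.sum_congr rfl fun j _ => by rw [hlamN_eq j]).symm
  -- cost of the candidate plan is at most vstar t
  set a : Fin (t / P) → ℝ := fun j =>
    h (t + N - (j.1 + 1) * P) (x (t + N - (j.1 + 1) * P)) (u (t + N - (j.1 + 1) * P)) with ha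
  set Jv : Fin (t / P) → ℝ := fun j =>
    ∑ k ∈ Finset.Ico (t + N - (j.1 + 1) * P) t, h k (x k) (u k) with hJv
  have hcost' : PlanCost P N h x u (t + 1) xb' ub' lam' ≤ vstar t := by
    have hQ : ∑ j : Fin ((t + 1) / P), lam' j *
        ∑ k ∈ Finset.Ico (t + 1 + N - (j.1 + 1) * P) (t + 1), h k (x k) (u k)
        = ∑ j : Fin (t / P), lam j * (Jv j - a j + h t (x t) (u t)) := by
      have := extend_sum (V := ℝ) hMM' lamN hlamN_zero
        (fun j => ∑ k ∈ Finset.Ico (t + 1 + N - (j + 1) * P) (t + 1), h k (x k) (u k))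
      simp only [smul_eq_mul] at this
      rw [hlam', this]
      refine Finset.sum_congr rfl fun j _ => ?_
      rw [hlamN_eq j]
      congr 1
      -- inner sum identity
      have h1 : (j.1 + 1) * P ≤ t := (hjP j).1
      have h2 : P ≤ (j.1 + 1) * P := (hjP j).2
      have hs_lt : t + N - (j.1 + 1) * P < t := by omega
      have e1 : t + 1 + N - (j.1 + 1) * P = (t + N - (j.1 + 1) * P) + 1 := by omega
      rw [e1]
      have hse : ∑ k ∈ Finset.Ico (t + N - (j.1 + 1) * P) (t + 1), h k (x k) (u k)
          = ∑ k ∈ Finset.Ico (t + N - (j.1 + 1) * P) t, h k (x k) (u k)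
            + h t (x t) (u t) :=
        Finset.sum_Ico_succ_top (by omega) _
      have hsb : ∑ k ∈ Finset.Ico (t + N - (j.1 + 1) * P) (t + 1), h k (x k) (u k)
          = h (t + N - (j.1 + 1) * P) (x (t + N - (j.1 + 1) * P)) (u (t + N - (j.1 + 1) * P))
            + ∑ k ∈ Finset.Ico ((t + N - (j.1 + 1) * P) + 1) (t + 1), h k (x k) (u k) :=
        Finset.sum_eq_sum_Ico_succ_bot (by omega) _
      simp only [hJv, ha]
      linarith
    have hS : ∑ k ∈ Finset.Ico (t + 1) (t + 1 + N), h k (xb' k) (ub' k)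
        = (∑ k ∈ Finset.Ico t (t + N), h k (xb k) (ub k)) - h t (x t) (u t)
          + h (t + N) (xb' (t + N)) (ub' (t + N)) := by
      have e2 : t + 1 + N = (t + N) + 1 := by omega
      rw [e2, Finset.sum_Ico_succ_top (by omega)]
      have hbot : ∑ k ∈ Finset.Ico t (t + N), h k (xb k) (ub k)
          = h t (xb t) (ub t) + ∑ k ∈ Finset.Ico (t + 1) (t + N), h k (xb k) (ub k) :=
        Finset.sum_eq_sum_Ico_succ_bot (by omega) _
      have hmid : ∑ k ∈ Finset.Ico (t + 1) (t + N), h k (xb' k) (ub' k)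
          = ∑ k ∈ Finset.Ico (t + 1) (t + N), h k (xb k) (ub k) := by
        refine Finset.sum_congr rfl fun k hk => ?_
        rw [Finset.mem_Ico] at hk
        rw [hxb'_lt k (by omega), hub'_lt k hk.2]
      rw [hmid, hinit, ← hu] at *
      rw [hbot]
      ring
    -- Jensen step
    have hJen : h (t + N) (xb' (t + N)) (ub' (t + N)) ≤ ∑ j : Fin (t / P), lam j * a j := by
      rw [hxb'_lt (t + N) le_rfl, hterm, hub'_top]
      have hpair : ((∑ j : Fin (t / P), lam j • x (t + N - (j.1 + 1) * P)),
          (∑ j : Fin (t / P), lam j • u (t + N - (j.1 + 1) * P)))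
          = ∑ j : Fin (t / P), lam j •
            ((x (t + N - (j.1 + 1) * P), u (t + N - (j.1 + 1) * P)) :
              (Fin n → ℝ) × (Fin d → ℝ)) := by
        rw [Prod.ext_iff]
        constructor
        · simp [Prod.fst_sum]
        · simp [Prod.snd_sum]
      have := (hconv (t + N)).map_sum_le (t := Finset.univ)
        (w := lam)
        (p := fun j : Fin (t / P) =>
          ((x (t + N - (j.1 + 1) * P), u (t + N - (j.1 + 1) * P)) :
            (Fin n → ℝ) × (Fin d → ℝ)))
        (fun j _ => hlam0 j) hlamsum (fun j _ => Set.mem_univ _)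
      calc h (t + N) (∑ j : Fin (t / P), lam j • x (t + N - (j.1 + 1) * P))
            (∑ j : Fin (t / P), lam j • u (t + N - (j.1 + 1) * P))
          ≤ ∑ j : Fin (t / P), lam j •
              h (t + N) (x (t + N - (j.1 + 1) * P)) (u (t + N - (j.1 + 1) * P)) := by
            have e := congrArg (fun p : (Fin n → ℝ) × (Fin d → ℝ) => h (t + N) p.1 p.2) hpair
            simp only at e
            rw [e]
            exact this
        _ = ∑ j : Fin (t / P), lam j * a j := by
            refine Finset.sum_congr rfl fun j _ => ?_
            simp only [smul_eq_mul, ha]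
            rw [← hhperj j]
    -- put everything together
    rw [← hcost]
    unfold PlanCost
    rw [hQ, hS]
    have hexp : ∑ j : Fin (t / P), lam j * (Jv j - a j + h t (x t) (u t))
        = (∑ j : Fin (t / P), lam j * Jv j) - (∑ j : Fin (t / P), lam j * a j) + h t (x t) (u t) := by
      simp only [mul_sub, mul_add]
      rw [Finset.sum_add_distrib, Finset.sum_sub_distrib, ← Finset.sum_mul, hlamsum, one_mul]
    rw [hexp]
    have : ∑ j : Fin (t / P), lam j *
        ∑ k ∈ Finset.Ico (t + N - (j.1 + 1) * P) t, h k (x k) (u k)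
        = ∑ j : Fin (t / P), lam j * Jv j := rfl
    rw [this]
    linarith
  -- conclude
  have hmem : PlanCost P N h x u (t + 1) xb' ub' lam' ∈
      {c : ℝ | ∃ xb ub lam, FeasPlanLTV P N A B X U x (t + 1) xb ub lam ∧
        PlanCost P N h x u (t + 1) xb ub lam = c} :=
    ⟨xb', ub', lam', hfeas', rfl⟩
  have := (hopt (t + 1) (by omega)).2 hmem
  linarith
end

section
/- Non-increasing cost for nonlinear systems (Corollary 1): consider the P-periodic system x_{t+1} = f_t(x_t, u_t) under Assumptions 1–4 (in particular Assumption 3 holds and the stage cost does not depend on the input, h_t(x, u) = h_t(x)), in closed loop with the LMPC that at each time t ≥ P applies the first input of an optimal plan. Suppose that at times t and t+1 optimal plans exist (the minimum of the plan cost over all feasible plans is attained). Then the optimal values satisfy J^LMPC_{t→t+N}(x_t) ≥ J^LMPC_{t+1→t+1+N}(x_{t+1}) for all t ≥ P. -/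
/-- A feasible plan at time `t` for the LMPC problem with dynamics
`x (k+1) = f k (x k) (u k)`: it starts at the current state `x t`, satisfies the
dynamics and the state and input constraints over the horizon `N`, and its terminal
state is the convex combination `∑_j λ_j x (t+N-jP)` (with `j = 1, …, M`,
`M = ⌊t/P⌋`) of states in the sampled safe set. -/
def FeasPlanNL {n d : ℕ} (P N : ℕ)
    (f : ℕ → (Fin n → ℝ) → (Fin d → ℝ) → (Fin n → ℝ))
    (X : ℕ → Set (Fin n → ℝ)) (U : ℕ → Set (Fin d → ℝ))
    (x : ℕ → Fin n → ℝ) (t : ℕ)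
    (xb : ℕ → Fin n → ℝ) (ub : ℕ → Fin d → ℝ) (lam : Fin (t / P) → ℝ) : Prop :=
  (∀ j, 0 ≤ lam j) ∧ (∑ j, lam j = 1) ∧
  xb t = x t ∧
  (∀ k, t ≤ k → k < t + N → xb (k + 1) = f k (xb k) (ub k)) ∧
  (∀ k, t ≤ k → k < t + N → xb k ∈ X k ∧ ub k ∈ U k) ∧
  xb (t + N) = ∑ j : Fin (t / P), lam j • x (t + N - (j.1 + 1) * P)

/-- The cost of a plan at time `t` for a stage cost depending only on the state:
the sum of the stage costs over the horizon plus the `Q`-function value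
`∑_j λ_j J_t(x (t+N-jP))`, where `J t i = ∑_{k=i}^{t-1} h k (x k)` is the
return-cost. -/
def PlanCostNL {n : ℕ} (P N : ℕ)
    (h : ℕ → (Fin n → ℝ) → ℝ)
    (x : ℕ → Fin n → ℝ) (t : ℕ)
    (xb : ℕ → Fin n → ℝ) (lam : Fin (t / P) → ℝ) : ℝ :=
  (∑ k ∈ Finset.Ico t (t + N), h k (xb k))
    + ∑ j : Fin (t / P), lam j *
        ∑ k ∈ Finset.Ico (t + N - (j.1 + 1) * P) t, h k (x k)

/-- **Non-increasing cost for nonlinear systems (Corollary 1).**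
Consider the `P`-periodic system `x (t+1) = f t (x t) (u t)` under Assumptions 1–4
(in particular Assumption 3 holds and the stage cost depends only on the state),
in closed loop with the LMPC that at each time `t ≥ P` applies the first input of an
optimal plan, where the optimal value `J^LMPC = vstar t` is attained.  Then
`J^LMPC_{t→t+N}(x t) ≥ J^LMPC_{t+1→t+1+N}(x (t+1))` for all `t ≥ P`. -/
theorem lmpc_nonincreasing_cost_nonlinear {n d : ℕ} (P N : ℕ) (hN : 1 ≤ N) (hNP : N < P)
    (f : ℕ → (Fin n → ℝ) → (Fin d → ℝ) → (Fin n → ℝ))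
    (hf : ∀ t, f (t + P) = f t)
    (X : ℕ → Set (Fin n → ℝ)) (U : ℕ → Set (Fin d → ℝ))
    -- Assumption 1 (with Assumption 4: the stage cost does not depend on the input):
    (hX : ∀ t, Convex ℝ (X t)) (hXper : ∀ t, X (t + P) = X t)
    (hU : ∀ t, Convex ℝ (U t)) (hUper : ∀ t, U (t + P) = U t)
    (h : ℕ → (Fin n → ℝ) → ℝ)
    (hconv : ∀ k, ConvexOn ℝ Set.univ (h k))
    (hhper : ∀ k, h (k + P) = h k)
    -- Assumption 3:
    (hA3 : ∀ (t' L : ℕ) (xs : Fin (L + 1) → Fin n → ℝ) (us : Fin (L + 1) → Fin d → ℝ),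
      (∀ j, xs j ∈ X t' ∧ us j ∈ U t' ∧ f t' (xs j) (us j) ∈ X (t' + 1)) →
      ∀ lam : Fin (L + 1) → ℝ, (∀ j, 0 ≤ lam j) → (∑ j, lam j = 1) →
        ∃ gam : Fin (L + 1) → ℝ, (∀ j, 0 ≤ gam j) ∧ (∑ j, gam j = 1) ∧
          f t' (∑ j, lam j • xs j) (∑ j, gam j • us j) = ∑ j, lam j • f t' (xs j) (us j))
    -- closed-loop trajectory and inputs:
    (x : ℕ → Fin n → ℝ) (u : ℕ → Fin d → ℝ)
    -- Assumption 2: feasible `P`-periodic initial trajectory on `0, …, P`: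
    (hdyn0 : ∀ k, k < P → x (k + 1) = f k (x k) (u k))
    (hxcon0 : ∀ k, k ≤ P → x k ∈ X k)
    (hucon0 : ∀ k, k < P → u k ∈ U k)
    (hper0 : x P = x 0)
    -- the LMPC optimal value `vstar t` is attained for every `t ≥ P`:
    (vstar : ℕ → ℝ)
    (hopt : ∀ t, P ≤ t → IsLeast
      {c : ℝ | ∃ xb ub lam, FeasPlanNL P N f X U x t xb ub lam ∧
        PlanCostNL P N h x t xb lam = c} (vstar t))
    -- the closed loop applies the first input of an optimal plan:
    (hsel : ∀ t, P ≤ t → ∃ xb ub lam,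
      FeasPlanNL P N f X U x t xb ub lam ∧
      PlanCostNL P N h x t xb lam = vstar t ∧ u t = ub t)
    (hcl : ∀ t, P ≤ t → x (t + 1) = f t (x t) (u t)) :
    ∀ t, P ≤ t → vstar t ≥ vstar (t + 1) := by
  intro t ht
  have hP : 0 < P := by omega
  obtain ⟨xb, ub, lam, hfeas, hcost, huq⟩ := hsel t ht
  obtain ⟨hlam0, hlam1, hx0, hdynp, hconp, hterm⟩ := hfeas
  -- iterated periodicity
  have iter : ∀ (α : Type) (g : ℕ → α), (∀ s, g (s + P) = g s) →
      ∀ s m, g (s + m * P) = g s := by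
    intro α g hg s m
    induction m with
    | zero => simp
    | succ m ih =>
      have e : s + (m + 1) * P = s + m * P + P := by ring
      rw [e, hg, ih]
  -- global closed-loop facts
  have hdynAll : ∀ k, x (k + 1) = f k (x k) (u k) := by
    intro k
    by_cases hk : k < P
    · exact hdyn0 k hk
    · exact hcl k (le_of_not_gt hk)
  have hxAll : ∀ k, x k ∈ X k := by
    intro k
    by_cases hk : k ≤ P
    · exact hxcon0 k hk
    · obtain ⟨xb2, ub2, lam2, ⟨_, _, hx02, _, hcon2, _⟩, _, _⟩ := hsel k (by omega)
      have := (hcon2 k le_rfl (by omega)).1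
      rwa [hx02] at this
  have huAll : ∀ k, u k ∈ U k := by
    intro k
    by_cases hk : k < P
    · exact hucon0 k hk
    · obtain ⟨xb2, ub2, lam2, ⟨_, _, _, _, hcon2, _⟩, _, hu2⟩ := hsel k (le_of_not_gt hk)
      rw [hu2]
      exact (hcon2 k le_rfl (by omega)).2
  have hM1 : 1 ≤ t / P := (Nat.one_le_div_iff hP).2 ht
  have hjP : ∀ j, j < t / P → (j + 1) * P ≤ t := by
    intro j hj
    calc (j + 1) * P ≤ (t / P) * P := Nat.mul_le_mul_right P hj
    _ ≤ t := Nat.div_mul_le_self t P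
  -- the weight function on ℕ
  set l : ℕ → ℝ := fun j => if hj : j < t / P then lam ⟨j, hj⟩ else 0 with hldef
  have hl0 : ∀ j, 0 ≤ l j := by
    intro j
    by_cases hj : j < t / P
    · simp only [hldef]; rw [dif_pos hj]; exact hlam0 _
    · simp only [hldef]; rw [dif_neg hj]
  have hzero : ∀ j, t / P ≤ j → l j = 0 := by
    intro j hj
    simp only [hldef]; rw [dif_neg (by omega)]
  have csum : ∑ j ∈ Finset.range (t / P), l j = 1 := by
    rw [← Fin.sum_univ_eq_sum_range l (t / P), ← hlam1]
    refine Finset.sum_congr rfl fun j _ => ?_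
    simp only [hldef]; rw [dif_pos j.2]
  have cvec : ∀ (F : ℕ → Fin n → ℝ),
      (∑ j : Fin (t / P), lam j • F j.1) = ∑ j ∈ Finset.range (t / P), l j • F j := by
    intro F
    rw [← Fin.sum_univ_eq_sum_range (fun j => l j • F j) (t / P)]
    refine Finset.sum_congr rfl fun j _ => ?_
    simp only [hldef]; rw [dif_pos j.2]
  have csc : ∀ (F : ℕ → ℝ),
      (∑ j : Fin (t / P), lam j * F j.1) = ∑ j ∈ Finset.range (t / P), l j * F j := by
    intro F
    rw [← Fin.sum_univ_eq_sum_range (fun j => l j * F j) (t / P)]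
    refine Finset.sum_congr rfl fun j _ => ?_
    simp only [hldef]; rw [dif_pos j.2]
  have hMM : t / P ≤ (t + 1) / P := Nat.div_le_div_right (Nat.le_succ t)
  have ext0 : ∑ j ∈ Finset.range ((t + 1) / P), l j = ∑ j ∈ Finset.range (t / P), l j := by
    rw [Finset.range_eq_Ico, ← Finset.sum_Ico_consecutive (fun j => l j) (Nat.zero_le _) hMM]
    have hz : ∑ j ∈ Finset.Ico (t / P) ((t + 1) / P), l j = 0 :=
      Finset.sum_eq_zero fun j hj => hzero j (Finset.mem_Ico.1 hj).1
    rw [hz, add_zero, ← Finset.range_eq_Ico]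
  have ext_vec : ∀ (F : ℕ → Fin n → ℝ),
      ∑ j ∈ Finset.range ((t + 1) / P), l j • F j = ∑ j ∈ Finset.range (t / P), l j • F j := by
    intro F
    rw [Finset.range_eq_Ico, ← Finset.sum_Ico_consecutive (fun j => l j • F j) (Nat.zero_le _) hMM]
    have hz : ∑ j ∈ Finset.Ico (t / P) ((t + 1) / P), l j • F j = 0 :=
      Finset.sum_eq_zero fun j hj => by rw [hzero j (Finset.mem_Ico.1 hj).1, zero_smul]
    rw [hz, add_zero, ← Finset.range_eq_Ico]
  have ext_sc : ∀ (F : ℕ → ℝ),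
      ∑ j ∈ Finset.range ((t + 1) / P), l j * F j = ∑ j ∈ Finset.range (t / P), l j * F j := by
    intro F
    rw [Finset.range_eq_Ico, ← Finset.sum_Ico_consecutive (fun j => l j * F j) (Nat.zero_le _) hMM]
    have hz : ∑ j ∈ Finset.Ico (t / P) ((t + 1) / P), l j * F j = 0 :=
      Finset.sum_eq_zero fun j hj => by rw [hzero j (Finset.mem_Ico.1 hj).1, zero_mul]
    rw [hz, add_zero, ← Finset.range_eq_Ico]
  have hterm' : xb (t + N) = ∑ j ∈ Finset.range (t / P), l j • x (t + N - (j + 1) * P) := by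
    rw [hterm]; exact cvec (fun j => x (t + N - (j + 1) * P))
  -- safe-set members
  have memX : ∀ j ∈ Finset.range (t / P), x (t + N - (j + 1) * P) ∈ X (t + N) := by
    intro j hj
    have hp := hjP j (Finset.mem_range.1 hj)
    have e1 : (t + N - (j + 1) * P) + (j + 1) * P = t + N := by omega
    have e2 : X (t + N) = X (t + N - (j + 1) * P) := by
      have := iter _ X hXper (t + N - (j + 1) * P) (j + 1)
      rw [e1] at this; exact this
    rw [e2]; exact hxAll _
  have memU : ∀ j ∈ Finset.range (t / P), u (t + N - (j + 1) * P) ∈ U (t + N) := by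
    intro j hj
    have hp := hjP j (Finset.mem_range.1 hj)
    have e1 : (t + N - (j + 1) * P) + (j + 1) * P = t + N := by omega
    have e2 : U (t + N) = U (t + N - (j + 1) * P) := by
      have := iter _ U hUper (t + N - (j + 1) * P) (j + 1)
      rw [e1] at this; exact this
    rw [e2]; exact huAll _
  -- Assumption 3 at time t+N
  obtain ⟨L, hL⟩ : ∃ L, t / P = L + 1 := ⟨t / P - 1, by omega⟩
  have hmemb : ∀ j : Fin (L + 1),
      x (t + N - (j.1 + 1) * P) ∈ X (t + N) ∧ u (t + N - (j.1 + 1) * P) ∈ U (t + N) ∧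
      f (t + N) (x (t + N - (j.1 + 1) * P)) (u (t + N - (j.1 + 1) * P)) ∈ X (t + N + 1) := by
    intro j
    have hj : j.1 < t / P := by omega
    have hp := hjP j.1 hj
    have e1 : (t + N - (j.1 + 1) * P) + (j.1 + 1) * P = t + N := by omega
    have e2 : ((t + N - (j.1 + 1) * P) + 1) + (j.1 + 1) * P = t + N + 1 := by omega
    have hfX : f (t + N) = f (t + N - (j.1 + 1) * P) := by
      have := iter _ f hf (t + N - (j.1 + 1) * P) (j.1 + 1)
      rw [e1] at this; exact this
    refine ⟨memX j.1 (Finset.mem_range.2 hj), memU j.1 (Finset.mem_range.2 hj), ?_⟩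
    rw [hfX, ← hdynAll]
    have e3 : X (t + N + 1) = X ((t + N - (j.1 + 1) * P) + 1) := by
      have := iter _ X hXper ((t + N - (j.1 + 1) * P) + 1) (j.1 + 1)
      rw [e2] at this; exact this
    rw [e3]; exact hxAll _
  have hl2nn : ∀ j : Fin (L + 1), 0 ≤ l j.1 := fun j => hl0 j.1
  have hl2sum : ∑ j : Fin (L + 1), l j.1 = 1 := by
    rw [Fin.sum_univ_eq_sum_range l (L + 1), ← hL, csum]
  obtain ⟨gam, hgam0, hgam1, hgdyn⟩ :=
    hA3 (t + N) L (fun j => x (t + N - (j.1 + 1) * P)) (fun j => u (t + N - (j.1 + 1) * P))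
      hmemb (fun j => l j.1) hl2nn hl2sum
  set g : ℕ → ℝ := fun j => if hj : j < L + 1 then gam ⟨j, hj⟩ else 0 with hgdef
  have hg0 : ∀ j, 0 ≤ g j := by
    intro j
    by_cases hj : j < L + 1
    · simp only [hgdef]; rw [dif_pos hj]; exact hgam0 _
    · simp only [hgdef]; rw [dif_neg hj]
  have gsum : ∑ j ∈ Finset.range (t / P), g j = 1 := by
    rw [hL, ← Fin.sum_univ_eq_sum_range g (L + 1), ← hgam1]
    refine Finset.sum_congr rfl fun j _ => ?_
    simp only [hgdef]; rw [dif_pos j.2]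
  -- the key one-step propagation of the convex combination
  have key : f (t + N) (∑ j ∈ Finset.range (t / P), l j • x (t + N - (j + 1) * P))
      (∑ j ∈ Finset.range (t / P), g j • u (t + N - (j + 1) * P))
      = ∑ j ∈ Finset.range (t / P), l j • x (t + N + 1 - (j + 1) * P) := by
    have e1 : (∑ j : Fin (L + 1), l j.1 • x (t + N - (j.1 + 1) * P))
        = ∑ j ∈ Finset.range (t / P), l j • x (t + N - (j + 1) * P) := by
      rw [hL]; exact Fin.sum_univ_eq_sum_range (fun j => l j • x (t + N - (j + 1) * P)) (L + 1)
    have e2 : (∑ j : Fin (L + 1), gam j • u (t + N - (j.1 + 1) * P))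
        = ∑ j ∈ Finset.range (t / P), g j • u (t + N - (j + 1) * P) := by
      rw [hL, ← Fin.sum_univ_eq_sum_range (fun j => g j • u (t + N - (j + 1) * P)) (L + 1)]
      refine Finset.sum_congr rfl fun j _ => ?_
      simp only [hgdef]; rw [dif_pos j.2]
    have e3 : (∑ j : Fin (L + 1),
          l j.1 • f (t + N) (x (t + N - (j.1 + 1) * P)) (u (t + N - (j.1 + 1) * P)))
        = ∑ j ∈ Finset.range (t / P), l j • x (t + N + 1 - (j + 1) * P) := by
      rw [hL, ← Fin.sum_univ_eq_sum_range (fun j => l j • x (t + N + 1 - (j + 1) * P)) (L + 1)]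
      refine Finset.sum_congr rfl fun j _ => ?_
      have hj : j.1 < t / P := by omega
      have hp := hjP j.1 hj
      have e4 : (t + N - (j.1 + 1) * P) + (j.1 + 1) * P = t + N := by omega
      have hfX : f (t + N) = f (t + N - (j.1 + 1) * P) := by
        have := iter _ f hf (t + N - (j.1 + 1) * P) (j.1 + 1)
        rw [e4] at this; exact this
      have e5 : t + N + 1 - (j.1 + 1) * P = (t + N - (j.1 + 1) * P) + 1 := by omega
      rw [hfX, ← hdynAll, e5]
    rw [← e1, ← e2, ← e3]
    exact hgdyn
  -- the candidate plan at time t+1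
  set xb' : ℕ → Fin n → ℝ := fun k =>
    if k = t + N + 1 then ∑ j ∈ Finset.range (t / P), l j • x (t + N + 1 - (j + 1) * P)
    else xb k with hxb'def
  set ub' : ℕ → Fin d → ℝ := fun k =>
    if k = t + N then ∑ j ∈ Finset.range (t / P), g j • u (t + N - (j + 1) * P)
    else ub k with hub'def
  set lam' : Fin ((t + 1) / P) → ℝ := fun j => l j.1 with hlam'def
  have exb : ∀ k, k ≠ t + N + 1 → xb' k = xb k := by
    intro k hk; simp only [hxb'def]; rw [if_neg hk]
  have exbT : xb' (t + N + 1) = ∑ j ∈ Finset.range (t / P), l j • x (t + N + 1 - (j + 1) * P) := by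
    simp [hxb'def]
  have eub : ∀ k, k ≠ t + N → ub' k = ub k := by
    intro k hk; simp only [hub'def]; rw [if_neg hk]
  have eubT : ub' (t + N) = ∑ j ∈ Finset.range (t / P), g j • u (t + N - (j + 1) * P) := by
    simp [hub'def]
  have hfeas' : FeasPlanNL P N f X U x (t + 1) xb' ub' lam' := by
    refine ⟨fun j => hl0 j.1, ?_, ?_, ?_, ?_, ?_⟩
    · show (∑ j : Fin ((t + 1) / P), l j.1) = 1
      rw [Fin.sum_univ_eq_sum_range l ((t + 1) / P), ext0, csum]
    · rw [exb (t + 1) (by omega), hdynp t le_rfl (by omega), hx0, ← huq]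
      exact (hcl t ht).symm
    · intro k hk1 hk2
      by_cases hkN : k = t + N
      · subst hkN
        rw [exbT, exb (t + N) (by omega), eubT, hterm']
        exact key.symm
      · rw [exb (k + 1) (by omega), exb k (by omega), eub k hkN]
        exact hdynp k (by omega) (by omega)
    · intro k hk1 hk2
      by_cases hkN : k = t + N
      · subst hkN
        constructor
        · rw [exb (t + N) (by omega), hterm']
          exact (hX (t + N)).sum_mem (fun j _ => hl0 j) csum memX
        · rw [eubT]
          exact (hU (t + N)).sum_mem (fun j _ => hg0 j) gsum memU
      · rw [exb k (by omega), eub k hkN]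
        exact hconp k (by omega) (by omega)
    · show xb' (t + 1 + N) = ∑ j : Fin ((t + 1) / P), l j.1 • x (t + 1 + N - (j.1 + 1) * P)
      rw [show t + 1 + N = t + N + 1 by omega, exbT,
        Fin.sum_univ_eq_sum_range (fun j => l j • x (t + N + 1 - (j + 1) * P)) ((t + 1) / P),
        ext_vec]
  -- cost comparison
  have hle : vstar (t + 1) ≤ PlanCostNL P N h x (t + 1) xb' lam' :=
    (hopt (t + 1) (by omega)).2 ⟨xb', ub', lam', hfeas', rfl⟩
  have sA : (∑ k ∈ Finset.Ico (t + 1) (t + 1 + N), h k (xb' k))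
      = (∑ k ∈ Finset.Ico t (t + N), h k (xb k)) - h t (xb t) + h (t + N) (xb (t + N)) := by
    rw [show t + 1 + N = t + N + 1 by omega]
    have e1 : (∑ k ∈ Finset.Ico (t + 1) (t + N + 1), h k (xb' k))
        = ∑ k ∈ Finset.Ico (t + 1) (t + N + 1), h k (xb k) :=
      Finset.sum_congr rfl fun k hk => by
        rw [exb k (by have := Finset.mem_Ico.1 hk; omega)]
    have e2 : (∑ k ∈ Finset.Ico t (t + N + 1), h k (xb k))
        = h t (xb t) + ∑ k ∈ Finset.Ico (t + 1) (t + N + 1), h k (xb k) :=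
      Finset.sum_eq_sum_Ico_succ_bot (by omega) _
    have e3 : (∑ k ∈ Finset.Ico t (t + N + 1), h k (xb k))
        = (∑ k ∈ Finset.Ico t (t + N), h k (xb k)) + h (t + N) (xb (t + N)) :=
      Finset.sum_Ico_succ_top (by omega) _
    rw [e1]; linarith
  have sB : (∑ j : Fin ((t + 1) / P), lam' j *
        ∑ k ∈ Finset.Ico (t + 1 + N - (j.1 + 1) * P) (t + 1), h k (x k))
      = (∑ j ∈ Finset.range (t / P), l j *
          ∑ k ∈ Finset.Ico (t + N - (j + 1) * P) t, h k (x k))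
        - (∑ j ∈ Finset.range (t / P), l j * h (t + N) (x (t + N - (j + 1) * P)))
        + h t (x t) := by
    have e0 : (∑ j : Fin ((t + 1) / P), lam' j *
          ∑ k ∈ Finset.Ico (t + 1 + N - (j.1 + 1) * P) (t + 1), h k (x k))
        = ∑ j ∈ Finset.range ((t + 1) / P), l j *
            ∑ k ∈ Finset.Ico (t + 1 + N - (j + 1) * P) (t + 1), h k (x k) := by
      exact Fin.sum_univ_eq_sum_range
        (fun j => l j * ∑ k ∈ Finset.Ico (t + 1 + N - (j + 1) * P) (t + 1), h k (x k)) _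
    rw [e0, ext_sc]
    have e1 : ∀ j ∈ Finset.range (t / P),
        l j * (∑ k ∈ Finset.Ico (t + 1 + N - (j + 1) * P) (t + 1), h k (x k))
        = l j * ((∑ k ∈ Finset.Ico (t + N - (j + 1) * P) t, h k (x k))
            - h (t + N) (x (t + N - (j + 1) * P)) + h t (x t)) := by
      intro j hj
      have hp := hjP j (Finset.mem_range.1 hj)
      have hPle : P ≤ (j + 1) * P := Nat.le_mul_of_pos_left P (Nat.succ_pos j)
      have hi_lt : t + N - (j + 1) * P < t := by omega
      have e2 : t + 1 + N - (j + 1) * P = (t + N - (j + 1) * P) + 1 := by omega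
      have e3 : (∑ k ∈ Finset.Ico ((t + N - (j + 1) * P) + 1) (t + 1), h k (x k))
          = (∑ k ∈ Finset.Ico ((t + N - (j + 1) * P) + 1) t, h k (x k)) + h t (x t) :=
        Finset.sum_Ico_succ_top (by omega) _
      have e4 : (∑ k ∈ Finset.Ico (t + N - (j + 1) * P) t, h k (x k))
          = h (t + N - (j + 1) * P) (x (t + N - (j + 1) * P))
            + ∑ k ∈ Finset.Ico ((t + N - (j + 1) * P) + 1) t, h k (x k) :=
        Finset.sum_eq_sum_Ico_succ_bot hi_lt _
      have e5 : h (t + N - (j + 1) * P) = h (t + N) := by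
        have e6 : (t + N - (j + 1) * P) + (j + 1) * P = t + N := by omega
        have := iter _ h hhper (t + N - (j + 1) * P) (j + 1)
        rw [e6] at this; exact this.symm
      rw [e2, e3, e4, ← e5]; ring
    rw [Finset.sum_congr rfl e1]
    have : ∀ j ∈ Finset.range (t / P),
        l j * ((∑ k ∈ Finset.Ico (t + N - (j + 1) * P) t, h k (x k))
            - h (t + N) (x (t + N - (j + 1) * P)) + h t (x t))
        = (l j * ∑ k ∈ Finset.Ico (t + N - (j + 1) * P) t, h k (x k))
          - l j * h (t + N) (x (t + N - (j + 1) * P)) + l j * h t (x t) := by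
      intro j _; ring
    rw [Finset.sum_congr rfl this, Finset.sum_add_distrib, Finset.sum_sub_distrib,
      ← Finset.sum_mul, csum, one_mul]
  have jensen : h (t + N) (xb (t + N))
      ≤ ∑ j ∈ Finset.range (t / P), l j * h (t + N) (x (t + N - (j + 1) * P)) := by
    rw [hterm']
    have := (hconv (t + N)).map_sum_le (fun j _ => hl0 j) csum
      (fun j _ => Set.mem_univ (x (t + N - (j + 1) * P)))
    simpa [smul_eq_mul] using this
  have hcost' : vstar t = (∑ k ∈ Finset.Ico t (t + N), h k (xb k))
      + ∑ j ∈ Finset.range (t / P), l j * ∑ k ∈ Finset.Ico (t + N - (j + 1) * P) t, h k (x k) := by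
    rw [← hcost]
    unfold PlanCostNL
    congr 1
    exact csc (fun j => ∑ k ∈ Finset.Ico (t + N - (j + 1) * P) t, h k (x k))
  have hC : PlanCostNL P N h x (t + 1) xb' lam' ≤ vstar t := by
    unfold PlanCostNL
    rw [sA, sB, hcost', hx0]
    linarith
  linarith
end
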